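/- Let K be a field of characteristic 2 with a discrete valuation v : Kˣ → ℤ, and let a, b, γ ∈ Kˣ and an integer n ≥ 1 be such that v(a) is even and negative, v(b) is odd and negative, and v(γ) = 0. Let π ∈ K with v(π) = 1 and set x = π·a²/b. Then v(f(x)) is even and v(g(x)) = 0; in particular v(f(x)·g(x)) is even. Here f(x) = a^{-4n}·b·x² + x + a·b^{-1} and g(x) = a^{-8n}·b²·x² + a^{-4n}·b·x + a^{1-4n} + γ. -/

import Mathlib

/-- A discrete valuation on a field `K`: a surjective group homomorphism `v : Kˣ → ℤ`
(encoded as an integer-valued function on `K`, multiplicative and surjective on nonzero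
elements) satisfying `v(x + y) ≥ min (v x) (v y)`. -/
structure DiscreteVal (K : Type*) [Field K] where
  /-- the underlying valuation function (its values at `0` are irrelevant) -/
  v : K → ℤ
  map_mul : ∀ x y : K, x ≠ 0 → y ≠ 0 → v (x * y) = v x + v y
  min_le_add : ∀ x y : K, x ≠ 0 → y ≠ 0 → x + y ≠ 0 → min (v x) (v y) ≤ v (x + y)
  surjective : ∀ m : ℤ, ∃ x : K, x ≠ 0 ∧ v x = m

/-- `f(x) = a^{-4n}·b·x² + x + a·b⁻¹`. -/
noncomputable def fDV {K : Type*} [Field K] (a b : K) (n : ℤ) (x : K) : K :=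
  a ^ (-(4 * n)) * b * x ^ 2 + x + a * b⁻¹

/-- `g(x) = a^{-8n}·b²·x² + a^{-4n}·b·x + a^{1-4n} + γ`. -/
noncomputable def gDV {K : Type*} [Field K] (a b γ : K) (n : ℤ) (x : K) : K :=
  a ^ (-(8 * n)) * b ^ 2 * x ^ 2 + a ^ (-(4 * n)) * b * x + a ^ (1 - 4 * n) + γ

namespace DiscreteVal

variable {K : Type*} [Field K]

lemma v_one (w : DiscreteVal K) : w.v 1 = 0 := by
  have h := w.map_mul 1 1 one_ne_zero one_ne_zero
  rw [mul_one] at h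
  omega

lemma v_inv (w : DiscreteVal K) {a : K} (ha : a ≠ 0) : w.v a⁻¹ = - w.v a := by
  have h := w.map_mul a a⁻¹ ha (inv_ne_zero ha)
  rw [mul_inv_cancel₀ ha, w.v_one] at h
  omega

lemma v_neg (w : DiscreteVal K) {a : K} (ha : a ≠ 0) : w.v (-a) = w.v a := by
  have h1 : w.v (-1 : K) = 0 := by
    have h := w.map_mul (-1) (-1) (by norm_num) (by norm_num)
    rw [neg_mul_neg, one_mul, w.v_one] at h
    omega
  have h := w.map_mul (-1) a (by norm_num) ha
  rw [neg_one_mul] at h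
  omega

lemma v_zpow (w : DiscreteVal K) {a : K} (ha : a ≠ 0) (m : ℤ) :
    w.v (a ^ m) = m * w.v a := by
  induction m using Int.induction_on with
  | zero => simpa using w.v_one
  | succ k ih =>
      rw [zpow_add_one₀ ha, w.map_mul _ _ (zpow_ne_zero _ ha) ha, ih]
      ring
  | pred k ih =>
      rw [zpow_sub_one₀ ha, w.map_mul _ _ (zpow_ne_zero _ ha) (inv_ne_zero ha), ih,
        w.v_inv ha]
      ring

lemma v_add_lt (w : DiscreteVal K) {x y : K} (hx : x ≠ 0) (hy : y ≠ 0)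
    (h : w.v x < w.v y) : x + y ≠ 0 ∧ w.v (x + y) = w.v x := by
  have hne : x + y ≠ 0 := by
    intro h0
    have hxy : x = -y := eq_neg_of_add_eq_zero_left h0
    rw [hxy, w.v_neg hy] at h
    omega
  refine ⟨hne, ?_⟩
  have h1 := w.min_le_add x y hx hy hne
  have h2 := w.min_le_add (x + y) (-y) hne (neg_ne_zero.mpr hy)
    (by rw [add_neg_cancel_right]; exact hx)
  rw [add_neg_cancel_right, w.v_neg hy] at h2
  omega

end DiscreteVal

/-- Local solvability computation at the place `𝔭` (Lemma 3.1 of the paper): with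
`x = π·a²/b`, `v(f(x))` is even and `v(g(x)) = 0`; in particular `v(f(x)·g(x))` is even. -/
theorem val_f_even_and_val_g_zero_at_p (K : Type*) [Field K] [CharP K 2] (w : DiscreteVal K)
    (a b γ : K) (ha0 : a ≠ 0) (hb0 : b ≠ 0) (hγ0 : γ ≠ 0) (n : ℤ) (hn : 1 ≤ n)
    (haEven : Even (w.v a)) (haNeg : w.v a < 0)
    (hbOdd : Odd (w.v b)) (hbNeg : w.v b < 0)
    (hγ : w.v γ = 0)
    (π : K) (hπ0 : π ≠ 0) (hπ : w.v π = 1)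
    (x : K) (hx : x = π * a ^ 2 / b) :
    (fDV a b n x ≠ 0 ∧ Even (w.v (fDV a b n x))) ∧
    (gDV a b γ n x ≠ 0 ∧ w.v (gDV a b γ n x) = 0) ∧
    Even (w.v (fDV a b n x * gDV a b γ n x)) := by
  set A := w.v a with hA
  set B := w.v b with hB
  obtain ⟨k, hk⟩ := haEven
  obtain ⟨m, hm⟩ := hbOdd
  have hA2 : A ≤ -2 := by omega
  have hB1 : B ≤ -1 := by omega
  have hprod : 4 ≤ (2 - 4 * n) * A := by nlinarith
  have hprod3 : 6 ≤ (1 - 4 * n) * A := by nlinarith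
  have hx0 : x ≠ 0 := by
    rw [hx]; exact div_ne_zero (mul_ne_zero hπ0 (pow_ne_zero 2 ha0)) hb0
  have hva2 : w.v (a ^ 2) = 2 * A := by
    rw [pow_two, w.map_mul a a ha0 ha0]; ring
  have hvx : w.v x = 1 + 2 * A - B := by
    rw [hx, div_eq_mul_inv, w.map_mul _ _ (mul_ne_zero hπ0 (pow_ne_zero 2 ha0)) (inv_ne_zero hb0),
      w.map_mul _ _ hπ0 (pow_ne_zero 2 ha0), hva2, w.v_inv hb0, hπ]
    ring
  have hvx2 : w.v (x ^ 2) = 2 + 4 * A - 2 * B := by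
    rw [pow_two, w.map_mul x x hx0 hx0, hvx]; ring
  -- f part
  have ht1ne : a ^ (-(4 * n)) * b * x ^ 2 ≠ 0 :=
    mul_ne_zero (mul_ne_zero (zpow_ne_zero _ ha0) hb0) (pow_ne_zero _ hx0)
  have hvt1 : w.v (a ^ (-(4 * n)) * b * x ^ 2) = -(4 * n) * A + B + (2 + 4 * A - 2 * B) := by
    rw [w.map_mul _ _ (mul_ne_zero (zpow_ne_zero _ ha0) hb0) (pow_ne_zero _ hx0),
      w.map_mul _ _ (zpow_ne_zero _ ha0) hb0, w.v_zpow ha0, hvx2]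
  have ht3ne : a * b⁻¹ ≠ 0 := mul_ne_zero ha0 (inv_ne_zero hb0)
  have hvt3 : w.v (a * b⁻¹) = A - B := by
    rw [w.map_mul _ _ ha0 (inv_ne_zero hb0), w.v_inv hb0]; ring
  have hs1 := w.v_add_lt hx0 ht1ne (by rw [hvx, hvt1]; nlinarith)
  have hfeq : fDV a b n x = (x + a ^ (-(4 * n)) * b * x ^ 2) + a * b⁻¹ := by
    rw [fDV]; ring
  have hs2 := w.v_add_lt hs1.1 ht3ne (by rw [hs1.2, hvx, hvt3]; omega)
  have hf0 : fDV a b n x ≠ 0 := by rw [hfeq]; exact hs2.1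
  have hvf : w.v (fDV a b n x) = 1 + 2 * A - B := by rw [hfeq, hs2.2, hs1.2, hvx]
  have hfeven : Even (w.v (fDV a b n x)) := by
    rw [hvf]; exact ⟨2 * k - m, by omega⟩
  -- g part
  have hu1ne : a ^ (-(8 * n)) * b ^ 2 * x ^ 2 ≠ 0 :=
    mul_ne_zero (mul_ne_zero (zpow_ne_zero _ ha0) (pow_ne_zero _ hb0)) (pow_ne_zero _ hx0)
  have hvb2 : w.v (b ^ 2) = 2 * B := by
    rw [pow_two, w.map_mul b b hb0 hb0]; ring
  have hvu1 : w.v (a ^ (-(8 * n)) * b ^ 2 * x ^ 2) = (4 - 8 * n) * A + 2 := by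
    rw [w.map_mul _ _ (mul_ne_zero (zpow_ne_zero _ ha0) (pow_ne_zero _ hb0)) (pow_ne_zero _ hx0),
      w.map_mul _ _ (zpow_ne_zero _ ha0) (pow_ne_zero _ hb0), w.v_zpow ha0, hvb2, hvx2]
    ring
  have hu2ne : a ^ (-(4 * n)) * b * x ≠ 0 :=
    mul_ne_zero (mul_ne_zero (zpow_ne_zero _ ha0) hb0) hx0
  have hvu2 : w.v (a ^ (-(4 * n)) * b * x) = (2 - 4 * n) * A + 1 := by
    rw [w.map_mul _ _ (mul_ne_zero (zpow_ne_zero _ ha0) hb0) hx0,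
      w.map_mul _ _ (zpow_ne_zero _ ha0) hb0, w.v_zpow ha0, hvx]
    ring
  have hu3ne : a ^ (1 - 4 * n) ≠ 0 := zpow_ne_zero _ ha0
  have hvu3 : w.v (a ^ (1 - 4 * n)) = (1 - 4 * n) * A := w.v_zpow ha0 _
  have hg12 := w.v_add_lt hu2ne hu1ne (by rw [hvu2, hvu1]; nlinarith)
  have hgeq : gDV a b γ n x =
      γ + ((a ^ (-(4 * n)) * b * x + a ^ (-(8 * n)) * b ^ 2 * x ^ 2) + a ^ (1 - 4 * n)) := by
    rw [gDV]; ring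
  have hg0 : gDV a b γ n x ≠ 0 ∧ w.v (gDV a b γ n x) = 0 := by
    by_cases hsz : (a ^ (-(4 * n)) * b * x + a ^ (-(8 * n)) * b ^ 2 * x ^ 2) + a ^ (1 - 4 * n) = 0
    · rw [hgeq, hsz, add_zero]
      exact ⟨hγ0, hγ⟩
    · have hsv : 0 < w.v ((a ^ (-(4 * n)) * b * x + a ^ (-(8 * n)) * b ^ 2 * x ^ 2) +
          a ^ (1 - 4 * n)) := by
        have hmin := w.min_le_add _ _ hg12.1 hu3ne hsz
        rw [hg12.2, hvu2, hvu3] at hmin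
        omega
      have hfin := w.v_add_lt hγ0 hsz (by rw [hγ]; exact hsv)
      rw [hgeq]
      exact ⟨hfin.1, by rw [hfin.2, hγ]⟩
  refine ⟨⟨hf0, hfeven⟩, hg0, ?_⟩
  rw [w.map_mul _ _ hf0 hg0.1, hg0.2, hvf]
  exact ⟨2 * k - m, by omega⟩
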